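/- Let α, β ∈ (0,1) with α + β > 1, v ∈ C^α and w ∈ C^β (Schauder-Hölder spaces). Then the Lévy area L(v,w) := Σ_p (∫_0^· Δ_p v d(S_{p−1} w) − ∫_0^· d(S_{p−1} v) Δ_p w) converges and defines a bounded bilinear operator from C^α × C^β to C^{α+β}, i.e. ‖L(v,w)‖_{α+β} ≲ ‖v‖_α ‖w‖_β. -/

import Mathlib

noncomputable section
open MeasureTheory Set

namespace Sch

/-- dyadic point `t⁰_{pm} = (m-1)/2^p`. -/
def pt0 (p m : ℕ) : ℝ := ((m : ℝ) - 1) / 2 ^ p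
/-- dyadic point `t¹_{pm} = (2m-1)/2^{p+1}`. -/
def pt1 (p m : ℕ) : ℝ := (2 * (m : ℝ) - 1) / 2 ^ (p + 1)
/-- dyadic point `t²_{pm} = m/2^p`. -/
def pt2 (p m : ℕ) : ℝ := (m : ℝ) / 2 ^ p

/-- The rescaled Haar function `χ_{pm} = 2^{p/2} H_{pm}`, with the conventions
`χ_{00} = 1` on `[0,1)` (derivative of `φ_{00}(t) = t`) and `χ_{p0} ≡ 0` for `p ≥ 1`. -/
def chi (p m : ℕ) (t : ℝ) : ℝ :=
  if m = 0 then (if p = 0 ∧ 0 ≤ t ∧ t < 1 then 1 else 0)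
  else if pt0 p m ≤ t ∧ t < pt1 p m then (2 : ℝ) ^ p
  else if pt1 p m ≤ t ∧ t < pt2 p m then -(2 : ℝ) ^ p
  else 0

/-- The rescaled Schauder tent function `φ_{pm} = 2^{p/2} G_{pm} = ∫_0^· χ_{pm}`. -/
def phi (p m : ℕ) (t : ℝ) : ℝ := ∫ s in (0:ℝ)..t, chi p m s

variable {E F G : Type*} [NormedAddCommGroup E] [NormedSpace ℝ E]
  [NormedAddCommGroup F] [NormedSpace ℝ F] [NormedAddCommGroup G] [NormedSpace ℝ G]

/-- The (rescaled) Schauder coefficient `f_{pm} = 2f(t¹_{pm}) - f(t⁰_{pm}) - f(t²_{pm})`,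
with the conventions `f_{00} = f(1) - f(0)` and `f_{p0} = 0` for `p ≥ 1`. -/
def coeff (f : ℝ → E) (p m : ℕ) : E :=
  if m = 0 then (if p = 0 then f 1 - f 0 else 0)
  else f (pt1 p m) + f (pt1 p m) - f (pt0 p m) - f (pt2 p m)

/-- Shifted Schauder blocks: `block f 0 = Δ_{-1} f ≡ f(0)` and `block f (p+1) = Δ_p f`. -/
def block (f : ℝ → E) : ℕ → ℝ → E
  | 0 => fun _ => f 0
  | (p + 1) => fun t => ∑ m ∈ Finset.range (2 ^ p + 1), phi p m t • coeff f p m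

/-- Partial sum `psum f p = S_{p-1} f` (blocks of generations `-1, 0, …, p-1`),
the piecewise linear interpolation of `f` on the dyadic grid of generation `p`. -/
def psum (f : ℝ → E) (p : ℕ) (t : ℝ) : E := ∑ k ∈ Finset.range (p + 1), block f k t

/-- Derivative of the shifted Schauder block. -/
def dblock (f : ℝ → E) : ℕ → ℝ → E
  | 0 => fun _ => 0
  | (p + 1) => fun t => ∑ m ∈ Finset.range (2 ^ p + 1), chi p m t • coeff f p m

/-- Derivative of `psum f p = S_{p-1} f`. -/
def dpsum (f : ℝ → E) (p : ℕ) (t : ℝ) : E := ∑ k ∈ Finset.range (p + 1), dblock f k t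

/-- `CoeffBound γ f K` expresses `‖f‖_γ = sup_{p,m} 2^{pγ} |f_{pm}| ≤ K`
(including the generation-(-1) coefficient `f_{-1,0} = f(0)`). -/
def CoeffBound (γ : ℝ) (f : ℝ → E) (K : ℝ) : Prop :=
  (2 : ℝ) ^ (-γ) * ‖f 0‖ ≤ K ∧
  ∀ p m : ℕ, m ≤ 2 ^ p → (2 : ℝ) ^ (γ * (p : ℝ)) * ‖coeff f p m‖ ≤ K

/-- The Schauder paraproduct `π_<(v,w) = ∑_{p≥0} S_{p-1}v · Δ_p w`. -/
def para (v : ℝ → (E →L[ℝ] F)) (w : ℝ → E) (t : ℝ) : F :=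
  ∑' p : ℕ, (psum v p t) (block w (p + 1) t)

/-- The `p`-th term of the Lévy area: `∫_0^t Δ_p v dS_{p-1}w - ∫_0^t d(S_{p-1}v) Δ_p w`. -/
def leviTerm (v : ℝ → (E →L[ℝ] F)) (w : ℝ → E) (p : ℕ) (t : ℝ) : F :=
  ∫ s in (0:ℝ)..t, ((block v (p + 1) s) (dpsum w p s) - (dpsum v p s) (block w (p + 1) s))

/-- The Lévy area `L(v,w) = ∑_p (∫ Δ_p v dS_{p-1}w - ∫ d(S_{p-1}v) Δ_p w)`. -/
def levi (v : ℝ → (E →L[ℝ] F)) (w : ℝ → E) (t : ℝ) : F := ∑' p : ℕ, leviTerm v w p t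

/-- The symmetric part
`S(v,w) = ∑_{m,n≤1} v_{0m}w_{0n} ∫_0^· φ_{0m} dφ_{0n} + (1/2) ∑_{p≥1} Δ_p v Δ_p w`. -/
def symPart (v : ℝ → (E →L[ℝ] F)) (w : ℝ → E) (t : ℝ) : F :=
  (∑ m ∈ Finset.range 2, ∑ n ∈ Finset.range 2,
      (∫ s in (0:ℝ)..t, phi 0 m s * chi 0 n s) • ((coeff v 0 m) (coeff w 0 n)))
    + (1 / 2 : ℝ) • ∑' p : ℕ, (block v (p + 2) t) (block w (p + 2) t)

/-- The Young integral `I(v, dw) = L(v,w) + S(v,w) + π_<(v,w)`. -/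
def young (v : ℝ → (E →L[ℝ] F)) (w : ℝ → E) (t : ℝ) : F :=
  levi v w t + symPart v w t + para v w t

end Sch

namespace SchProof
open Sch intervalIntegral

/-! ### dyadic point arithmetic -/

lemma twopow_pos (p : ℕ) : (0:ℝ) < 2 ^ p := by positivity

lemma pt0_eq (p m : ℕ) : pt0 p m = (2*(m:ℝ) - 2)/2^(p+1) := by
  unfold pt0; rw [pow_succ]; field_simp

lemma pt2_eq (p m : ℕ) : pt2 p m = (2*(m:ℝ))/2^(p+1) := by
  unfold pt2; rw [pow_succ]; field_simp

lemma pt1_sub_pt0 (p m : ℕ) : pt1 p m - pt0 p m = 1/2^(p+1) := by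
  rw [pt0_eq]; unfold pt1; field_simp; ring

lemma pt2_sub_pt1 (p m : ℕ) : pt2 p m - pt1 p m = 1/2^(p+1) := by
  rw [pt2_eq]; unfold pt1; field_simp; ring

lemma pt2_sub_pt0 (p m : ℕ) : pt2 p m - pt0 p m = 1/2^p := by
  unfold pt0 pt2; field_simp; ring

lemma pt0_lt_pt1 (p m : ℕ) : pt0 p m < pt1 p m := by
  have h := pt1_sub_pt0 p m
  have : (0:ℝ) < 1/2^(p+1) := by positivity
  linarith

lemma pt1_lt_pt2 (p m : ℕ) : pt1 p m < pt2 p m := by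
  have h := pt2_sub_pt1 p m
  have : (0:ℝ) < 1/2^(p+1) := by positivity
  linarith

lemma pt0_lt_pt2 (p m : ℕ) : pt0 p m < pt2 p m := (pt0_lt_pt1 p m).trans (pt1_lt_pt2 p m)

lemma pt0_nonneg (p m : ℕ) (hm : 1 ≤ m) : 0 ≤ pt0 p m := by
  unfold pt0
  have : (1:ℝ) ≤ (m:ℝ) := by exact_mod_cast hm
  apply div_nonneg _ (le_of_lt (twopow_pos p))
  linarith

lemma pt2_le_one (p m : ℕ) (hm : m ≤ 2^p) : pt2 p m ≤ 1 := by
  unfold pt2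
  rw [div_le_one (twopow_pos p)]
  exact_mod_cast hm

/-! ### chi basics -/

lemma chi_abs_le (p m : ℕ) (t : ℝ) : |chi p m t| ≤ 2 ^ p := by
  unfold chi
  have h1 : (1:ℝ) ≤ 2^p := one_le_pow₀ (by norm_num)
  split_ifs <;> simp [abs_of_nonneg, le_of_lt (twopow_pos p), h1, abs_le] <;> positivity

lemma chi_eq_zero_of_lt {p m : ℕ} (hm : m ≠ 0) {x : ℝ} (h : x < pt0 p m) : chi p m x = 0 := by
  unfold chi
  have h1 := pt0_lt_pt1 p m
  rw [if_neg hm]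
  split_ifs with h' h''
  · exact absurd h'.1 (by linarith)
  · exact absurd h''.1 (by linarith)
  · rfl

lemma chi_eq_zero_of_ge {p m : ℕ} (hm : m ≠ 0) {x : ℝ} (h : pt2 p m ≤ x) : chi p m x = 0 := by
  unfold chi
  have h1 := pt1_lt_pt2 p m
  rw [if_neg hm]
  split_ifs with h' h''
  · exact absurd h'.2 (by linarith)
  · exact absurd h''.2 (by linarith)
  · rfl

lemma chi_support {p m : ℕ} (hm : m ≠ 0) {x : ℝ} (h : chi p m x ≠ 0) :
    pt0 p m ≤ x ∧ x < pt2 p m := by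
  constructor
  · by_contra h'; exact h (chi_eq_zero_of_lt hm (not_le.mp h'))
  · by_contra h'; exact h (chi_eq_zero_of_ge hm (not_lt.mp h'))

lemma measurable_ico (a b c : ℝ) : Measurable (fun t => if a ≤ t ∧ t < b then c else (0:ℝ)) := by
  have : (fun t => if a ≤ t ∧ t < b then c else (0:ℝ)) = (Set.Ico a b).indicator (fun _ => c) := by
    ext t
    by_cases h : a ≤ t ∧ t < b
    · rw [if_pos h, Set.indicator_of_mem (Set.mem_Ico.mpr h)]
    · rw [if_neg h, Set.indicator_of_notMem (fun hh => h (Set.mem_Ico.mp hh))]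
  rw [this]
  exact measurable_const.indicator measurableSet_Ico

lemma measurable_chi (p m : ℕ) : Measurable (chi p m) := by
  unfold chi
  by_cases hm : m = 0 <;> simp only [hm, if_true, if_false, reduceIte]
  · by_cases hp : p = 0 <;> simp only [hp, true_and, false_and, if_false, reduceIte]
    · exact measurable_ico 0 1 1
    · exact measurable_const
  · have : (fun t => if pt0 p m ≤ t ∧ t < pt1 p m then (2:ℝ)^p
        else if pt1 p m ≤ t ∧ t < pt2 p m then -(2:ℝ)^p else 0)
        = (fun t => (if pt0 p m ≤ t ∧ t < pt1 p m then (2:ℝ)^p else 0)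
            + (if pt1 p m ≤ t ∧ t < pt2 p m then -(2:ℝ)^p else 0)) := by
      ext t
      have h1 := pt0_lt_pt1 p m
      by_cases hA : pt0 p m ≤ t ∧ t < pt1 p m
      · rw [if_pos hA, if_pos hA, if_neg (fun hB => absurd hB.1 (not_le.mpr hA.2)), add_zero]
      · rw [if_neg hA, if_neg hA, zero_add]
    rw [this]
    exact (measurable_ico _ _ _).add (measurable_ico _ _ _)

noncomputable section
open MeasureTheory Set intervalIntegral Sch

variable {E F : Type*} [NormedAddCommGroup E] [NormedSpace ℝ E]
  [NormedAddCommGroup F] [NormedSpace ℝ F]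

lemma intervalIntegrable_of_bdd {f : ℝ → E} {C : ℝ} (hm : AEStronglyMeasurable f volume)
    (h : ∀ x, ‖f x‖ ≤ C) (a b : ℝ) : IntervalIntegrable f volume a b := by
  rw [intervalIntegrable_iff]
  refine Measure.integrableOn_of_bounded ?_ hm (ae_of_all _ h)
  rw [Set.uIoc]; exact measure_Ioc_lt_top.ne

lemma intervalIntegrable_chi (p m : ℕ) (a b : ℝ) :
    IntervalIntegrable (chi p m) volume a b :=
  intervalIntegrable_of_bdd (measurable_chi p m).aestronglyMeasurable
    (fun x => by rw [Real.norm_eq_abs]; exact chi_abs_le p m x) a b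

/-- integral of a function constant on `Ico a b`. -/
lemma integral_constOn {f : ℝ → ℝ} {a b c : ℝ} (hab : a ≤ b)
    (h : ∀ x ∈ Set.Ico a b, f x = c) : ∫ x in a..b, f x = c * (b - a) := by
  have hb : ∀ᵐ x : ℝ ∂volume, x ≠ b := by
    have : volume ({b} : Set ℝ) = 0 := measure_singleton b
    rw [ae_iff]
    simpa using this
  have h1 : ∀ᵐ x ∂volume, x ∈ Set.uIoc a b → f x = c := by
    filter_upwards [hb] with x hx hmem
    rw [Set.uIoc_of_le hab] at hmem
    exact h x ⟨le_of_lt hmem.1, lt_of_le_of_ne hmem.2 hx⟩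
  rw [intervalIntegral.integral_congr_ae h1, intervalIntegral.integral_const, smul_eq_mul,
    mul_comm]

/-! ### comparisons with dyadic grid constants -/

/-- A dyadic rational of generation `≤ i` does not separate points of a generation-`i` cell. -/
lemma grid_cmp {i e : ℕ} (he : e ≤ i) (k : ℤ) {m : ℕ} {s t : ℝ}
    (hs0 : pt0 i m ≤ s) (hs2 : s < pt2 i m) (ht0 : pt0 i m ≤ t) (ht2 : t < pt2 i m) :
    (((k:ℝ)/2^e ≤ s) ↔ ((k:ℝ)/2^e ≤ t)) ∧ ((s < (k:ℝ)/2^e) ↔ (t < (k:ℝ)/2^e)) := by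
  set c : ℝ := (k:ℝ)/2^e with hc
  have hcell : c ≤ pt0 i m ∨ pt2 i m ≤ c := by
    have h2i : (0:ℝ) < 2^i := twopow_pos i
    have hsplit : (k:ℤ) * 2^(i-e) ≤ (m:ℤ) - 1 ∨ (m:ℤ) ≤ k * 2^(i-e) := by omega
    have hce : c = ((k * 2^(i-e) : ℤ) : ℝ) / 2^i := by
      rw [hc]
      have : (2:ℝ)^i = 2^e * 2^(i-e) := by
        rw [← pow_add]; congr 1; omega
      push_cast
      rw [this]
      field_simp
    rcases hsplit with h | h
    · left
      rw [hce]
      unfold pt0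
      gcongr
      have h' : ((k * 2^(i-e) : ℤ) : ℝ) ≤ (((m:ℤ) - 1 : ℤ) : ℝ) := by exact_mod_cast h
      push_cast at h' ⊢
      linarith
    · right
      rw [hce]
      unfold pt2
      gcongr
      exact_mod_cast h
  rcases hcell with h | h
  · constructor
    · constructor <;> intro _ <;> linarith
    · constructor <;> intro hlt <;> linarith
  · constructor
    · constructor <;> intro hle <;> linarith
    · constructor <;> intro _ <;> linarith

/-- `chi p n` is constant on cells of generation `i ≥ p+1`. -/
lemma chi_const_cell {p i n m : ℕ} (hpi : p + 1 ≤ i) {s t : ℝ}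
    (hs0 : pt0 i m ≤ s) (hs2 : s < pt2 i m) (ht0 : pt0 i m ≤ t) (ht2 : t < pt2 i m) :
    chi p n s = chi p n t := by
  have hp : p ≤ i := by omega
  have A0 : (pt0 p n ≤ s ↔ pt0 p n ≤ t) ∧ (s < pt0 p n ↔ t < pt0 p n) := by
    have h : pt0 p n = (((n:ℤ) - 1 : ℤ):ℝ)/2^p := by unfold pt0; push_cast; ring_nf
    rw [h]; exact grid_cmp hp _ hs0 hs2 ht0 ht2
  have A1 : (pt1 p n ≤ s ↔ pt1 p n ≤ t) ∧ (s < pt1 p n ↔ t < pt1 p n) := by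
    have h : pt1 p n = ((2*(n:ℤ) - 1 : ℤ):ℝ)/2^(p+1) := by unfold pt1; push_cast; ring_nf
    rw [h]; exact grid_cmp hpi _ hs0 hs2 ht0 ht2
  have A2 : (pt2 p n ≤ s ↔ pt2 p n ≤ t) ∧ (s < pt2 p n ↔ t < pt2 p n) := by
    have h : pt2 p n = (((n:ℤ)) :ℝ)/2^p := by unfold pt2; push_cast; ring_nf
    rw [h]; exact grid_cmp hp _ hs0 hs2 ht0 ht2
  have Z : ((0:ℝ) ≤ s ↔ (0:ℝ) ≤ t) ∧ (s < (0:ℝ) ↔ t < (0:ℝ)) := by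
    have h : (0:ℝ) = ((0:ℤ):ℝ)/2^(0:ℕ) := by norm_num
    rw [h]; exact grid_cmp (Nat.zero_le i) _ hs0 hs2 ht0 ht2
  have O : ((1:ℝ) ≤ s ↔ (1:ℝ) ≤ t) ∧ (s < (1:ℝ) ↔ t < (1:ℝ)) := by
    have h : (1:ℝ) = ((1:ℤ):ℝ)/2^(0:ℕ) := by norm_num
    rw [h]; exact grid_cmp (Nat.zero_le i) _ hs0 hs2 ht0 ht2
  unfold chi
  exact if_congr Iff.rfl
    (if_congr (and_congr Iff.rfl (and_congr Z.1 O.2)) rfl rfl)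
    (if_congr (and_congr A0.1 A1.2) rfl
      (if_congr (and_congr A1.1 A2.2) rfl rfl))

/-! ### phi facts -/

lemma phi_sub (p m : ℕ) (a b : ℝ) : phi p m b - phi p m a = ∫ x in a..b, chi p m x := by
  unfold phi
  exact integral_interval_sub_left (intervalIntegrable_chi p m 0 b)
    (intervalIntegrable_chi p m 0 a)

lemma phi_eq_zero_of_le {p m : ℕ} (hm : m ≠ 0) {t : ℝ} (h : t ≤ pt0 p m) : phi p m t = 0 := by
  have hpt0 : 0 ≤ pt0 p m := pt0_nonneg p m (Nat.one_le_iff_ne_zero.mpr hm)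
  unfold phi
  have h1 : ∀ᵐ x ∂(volume : MeasureTheory.Measure ℝ), x ∈ Set.uIoc 0 t → chi p m x = 0 := by
    have hb : ∀ᵐ x : ℝ ∂volume, x ≠ pt0 p m := by
      rw [MeasureTheory.ae_iff]; simpa using MeasureTheory.measure_singleton (pt0 p m)
    filter_upwards [hb] with x hx hmem
    apply chi_eq_zero_of_lt hm
    have hle : x ≤ pt0 p m := by
      rcases Set.mem_uIoc.mp hmem with h' | h'
      · linarith [h'.2]
      · linarith [h'.2]
    exact lt_of_le_of_ne hle hx
  rw [intervalIntegral.integral_congr_ae h1, intervalIntegral.integral_zero]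

lemma phi_pt2 {p m : ℕ} (hm : m ≠ 0) : phi p m (pt2 p m) = 0 := by
  have h0 : phi p m (pt0 p m) = 0 := phi_eq_zero_of_le hm le_rfl
  have hI1 : ∫ x in (pt0 p m)..(pt1 p m), chi p m x = (2:ℝ)^p * (pt1 p m - pt0 p m) := by
    apply integral_constOn (le_of_lt (pt0_lt_pt1 p m))
    intro x hx
    unfold chi
    rw [if_neg hm, if_pos ⟨hx.1, hx.2⟩]
  have hI2 : ∫ x in (pt1 p m)..(pt2 p m), chi p m x = -(2:ℝ)^p * (pt2 p m - pt1 p m) := by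
    apply integral_constOn (le_of_lt (pt1_lt_pt2 p m))
    intro x hx
    unfold chi
    rw [if_neg hm, if_neg (fun hc => absurd hc.2 (not_lt.mpr hx.1)), if_pos ⟨hx.1, hx.2⟩]
  have hsub : phi p m (pt2 p m) - phi p m (pt0 p m) = ∫ x in (pt0 p m)..(pt2 p m), chi p m x :=
    phi_sub p m _ _
  rw [← intervalIntegral.integral_add_adjacent_intervals
    (intervalIntegrable_chi p m _ _) (intervalIntegrable_chi p m _ _) (a := pt0 p m)
    (b := pt1 p m) (c := pt2 p m), hI1, hI2] at hsub
  rw [pt1_sub_pt0, pt2_sub_pt1] at hsub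
  linarith [hsub]

lemma phi_eq_zero_of_ge {p m : ℕ} (hm : m ≠ 0) {t : ℝ} (h : pt2 p m ≤ t) : phi p m t = 0 := by
  have hsub : phi p m t - phi p m (pt2 p m) = ∫ x in (pt2 p m)..t, chi p m x := phi_sub p m _ _
  rw [phi_pt2 hm, sub_zero] at hsub
  rw [hsub]
  rw [integral_constOn h (fun x hx => chi_eq_zero_of_ge hm hx.1), zero_mul]

lemma phi_abs_le (p m : ℕ) (t : ℝ) : |phi p m t| ≤ 1 := by
  by_cases hm : m = 0
  · subst hm
    by_cases hp : p = 0
    · subst hp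
      rcases le_or_gt t 0 with ht | ht
      · have h1 : ∀ᵐ x ∂(volume : MeasureTheory.Measure ℝ), x ∈ Set.uIoc 0 t → chi 0 0 x = 0 := by
          have hb : ∀ᵐ x : ℝ ∂volume, x ≠ 0 := by
            rw [MeasureTheory.ae_iff]; simpa using MeasureTheory.measure_singleton (0:ℝ)
          filter_upwards [hb] with x hx hmem
          have hle : x ≤ 0 := by
            rcases Set.mem_uIoc.mp hmem with h' | h'
            · linarith [h'.2]
            · linarith [h'.2]
          unfold chi
          rw [if_pos rfl, if_neg]
          rintro ⟨-, h0, -⟩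
          exact hx (le_antisymm hle h0)
        unfold phi
        rw [intervalIntegral.integral_congr_ae h1, intervalIntegral.integral_zero]
        norm_num
      · rcases le_or_gt t 1 with ht1 | ht1
        · unfold phi
          rw [← Real.norm_eq_abs]
          have := intervalIntegral.norm_integral_le_of_norm_le_const
            (C := 1) (f := chi 0 0) (a := 0) (b := t) ?_
          · calc ‖∫ x in (0:ℝ)..t, chi 0 0 x‖ ≤ 1 * |t - 0| := this
              _ ≤ 1 := by rw [one_mul, sub_zero, abs_of_pos ht]; exact ht1
          · intro x _
            rw [Real.norm_eq_abs]
            simpa using chi_abs_le 0 0 x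
        · have h1 : phi 0 0 1 = 1 := by
            have : phi 0 0 1 - phi 0 0 0 = ∫ x in (0:ℝ)..1, chi 0 0 x := phi_sub 0 0 0 1
            have h0 : phi 0 0 0 = 0 := by unfold phi; simp
            have hc : ∫ x in (0:ℝ)..1, chi 0 0 x = 1 * (1 - 0) := by
              apply integral_constOn zero_le_one
              intro x hx
              unfold chi
              rw [if_pos rfl, if_pos ⟨rfl, hx.1, hx.2⟩]
            rw [h0, sub_zero, hc] at this
            rw [this]; norm_num
          have hz : ∫ x in (1:ℝ)..t, chi 0 0 x = 0 := by
            rw [integral_constOn (le_of_lt ht1), zero_mul]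
            intro x hx
            unfold chi
            rw [if_pos rfl, if_neg]
            rintro ⟨-, -, hlt⟩
            linarith [hx.1]
          have : phi 0 0 t - phi 0 0 1 = ∫ x in (1:ℝ)..t, chi 0 0 x := phi_sub 0 0 1 t
          rw [h1, hz] at this
          have : phi 0 0 t = 1 := by linarith
          rw [this]; norm_num
    · have : phi p 0 t = 0 := by
        unfold phi chi
        simp [hp]
      rw [this]; norm_num
  · rcases le_or_gt t (pt0 p m) with h | h
    · rw [phi_eq_zero_of_le hm h]; norm_num
    rcases le_or_gt (pt2 p m) t with h2 | h2
    · rw [phi_eq_zero_of_ge hm h2]; norm_num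
    · have h0 : phi p m (pt0 p m) = 0 := phi_eq_zero_of_le hm le_rfl
      have hsub : phi p m t - phi p m (pt0 p m) = ∫ x in (pt0 p m)..t, chi p m x :=
        phi_sub p m _ _
      rw [h0, sub_zero] at hsub
      rw [hsub, ← Real.norm_eq_abs]
      have hb := intervalIntegral.norm_integral_le_of_norm_le_const
        (C := (2:ℝ)^p) (f := chi p m) (a := pt0 p m) (b := t)
        (fun x _ => by rw [Real.norm_eq_abs]; exact chi_abs_le p m x)
      calc ‖∫ x in (pt0 p m)..t, chi p m x‖ ≤ 2^p * |t - pt0 p m| := hb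
        _ ≤ 2^p * (pt2 p m - pt0 p m) := by
            apply mul_le_mul_of_nonneg_left _ (le_of_lt (twopow_pos p))
            rw [abs_of_pos (by linarith)]
            linarith
        _ = 1 := by rw [pt2_sub_pt0]; field_simp

lemma phi_support {p m : ℕ} (hm : m ≠ 0) {x : ℝ} (h : phi p m x ≠ 0) :
    pt0 p m < x ∧ x < pt2 p m := by
  constructor
  · by_contra h'; exact h (phi_eq_zero_of_le hm (not_lt.mp h'))
  · by_contra h'; exact h (phi_eq_zero_of_ge hm (not_lt.mp h'))

lemma cell_index_unique {p a b : ℕ} {x : ℝ}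
    (ha0 : pt0 p a ≤ x) (ha2 : x < pt2 p a) (hb0 : pt0 p b ≤ x) (hb2 : x < pt2 p b) :
    a = b := by
  have h2 : (0:ℝ) < 2^p := twopow_pos p
  simp only [pt0, pt2] at ha0 ha2 hb0 hb2
  rw [div_le_iff₀ h2] at ha0 hb0
  rw [lt_div_iff₀ h2] at ha2 hb2
  have h1 : (a:ℝ) < (b:ℝ) + 1 := by linarith
  have h2' : (b:ℝ) < (a:ℝ) + 1 := by linarith
  have h1' : a < b + 1 := by exact_mod_cast h1
  have h2'' : b < a + 1 := by exact_mod_cast h2'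
  omega

lemma chisum (p : ℕ) (s : ℝ) : ∑ n ∈ Finset.range (2^p + 1), |chi p n s| ≤ 2 * 2^p := by
  rw [Finset.sum_range_succ']
  have h0 : |chi p 0 s| ≤ 1 := by
    unfold chi
    rw [if_pos rfl]
    split_ifs <;> norm_num
  have htail : ∑ n ∈ Finset.range (2^p), |chi p (n+1) s| ≤ 2^p := by
    by_cases hex : ∃ n ∈ Finset.range (2^p), chi p (n+1) s ≠ 0
    · obtain ⟨n₀, hn₀, hne⟩ := hex
      rw [Finset.sum_eq_single_of_mem n₀ hn₀ ?_]
      · exact chi_abs_le p (n₀+1) s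
      · intro b hb hbne
        rw [abs_eq_zero]
        by_contra hbz
        have hA := chi_support (Nat.succ_ne_zero n₀) hne
        have hB := chi_support (Nat.succ_ne_zero b) hbz
        exact hbne (by
          have := cell_index_unique hB.1 hB.2 hA.1 hA.2
          omega)
    · push_neg at hex
      rw [Finset.sum_eq_zero (fun n hn => by rw [abs_eq_zero]; exact hex n hn)]
      positivity
  have h1 : (1:ℝ) ≤ 2^p := one_le_pow₀ (by norm_num)
  linarith

lemma phisum (p : ℕ) (s : ℝ) : ∑ n ∈ Finset.range (2^p + 1), |phi p n s| ≤ 2 := by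
  rw [Finset.sum_range_succ']
  have h0 : |phi p 0 s| ≤ 1 := phi_abs_le p 0 s
  have htail : ∑ n ∈ Finset.range (2^p), |phi p (n+1) s| ≤ 1 := by
    by_cases hex : ∃ n ∈ Finset.range (2^p), phi p (n+1) s ≠ 0
    · obtain ⟨n₀, hn₀, hne⟩ := hex
      rw [Finset.sum_eq_single_of_mem n₀ hn₀ ?_]
      · exact phi_abs_le p (n₀+1) s
      · intro b hb hbne
        rw [abs_eq_zero]
        by_contra hbz
        have hA := phi_support (Nat.succ_ne_zero n₀) hne
        have hB := phi_support (Nat.succ_ne_zero b) hbz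
        exact hbne (by
          have := cell_index_unique (le_of_lt hB.1) hB.2 (le_of_lt hA.1) hA.2
          omega)
    · push_neg at hex
      rw [Finset.sum_eq_zero (fun n hn => by rw [abs_eq_zero]; exact hex n hn)]
      norm_num
  linarith

/-! ### norm estimates for blocks -/

lemma rpow_natCast' (p : ℕ) : ((2:ℝ)^p : ℝ) = (2:ℝ)^((p:ℝ)) := (Real.rpow_natCast 2 p).symm

lemma rpow_two_pos (x : ℝ) : (0:ℝ) < (2:ℝ)^x := Real.rpow_pos_of_pos two_pos x

lemma coeffBound_nonneg {γ : ℝ} {f : ℝ → E} {K : ℝ} (h : CoeffBound γ f K) : 0 ≤ K :=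
  le_trans (by positivity) h.1

lemma coeff_norm_le {γ : ℝ} {f : ℝ → E} {K : ℝ} (h : CoeffBound γ f K) {p m : ℕ}
    (hm : m ≤ 2^p) : ‖coeff f p m‖ ≤ K * (2:ℝ) ^ (-(γ * (p:ℝ))) := by
  have h2 := h.2 p m hm
  have hpos : (0:ℝ) < (2:ℝ) ^ (γ * (p:ℝ)) := rpow_two_pos _
  have := mul_le_mul_of_nonneg_left h2 (le_of_lt (inv_pos.mpr hpos))
  rw [← mul_assoc, inv_mul_cancel₀ (ne_of_gt hpos), one_mul] at this
  calc ‖coeff f p m‖ ≤ ((2:ℝ) ^ (γ * (p:ℝ)))⁻¹ * K := this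
    _ = K * (2:ℝ) ^ (-(γ * (p:ℝ))) := by rw [Real.rpow_neg (by norm_num), mul_comm]

lemma block_norm_le {γ : ℝ} {f : ℝ → E} {K : ℝ} (h : CoeffBound γ f K) (p : ℕ) (s : ℝ) :
    ‖block f (p+1) s‖ ≤ 2 * K * (2:ℝ)^(-(γ * (p:ℝ))) := by
  have hK := coeffBound_nonneg h
  show ‖∑ m ∈ Finset.range (2^p+1), phi p m s • coeff f p m‖ ≤ _
  calc ‖∑ m ∈ Finset.range (2^p+1), phi p m s • coeff f p m‖
      ≤ ∑ m ∈ Finset.range (2^p+1), ‖phi p m s • coeff f p m‖ := norm_sum_le _ _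
    _ ≤ ∑ m ∈ Finset.range (2^p+1), |phi p m s| * (K * (2:ℝ)^(-(γ * (p:ℝ)))) := by
        apply Finset.sum_le_sum
        intro n hn
        rw [norm_smul, Real.norm_eq_abs]
        exact mul_le_mul_of_nonneg_left
          (coeff_norm_le h (Nat.lt_succ_iff.mp (Finset.mem_range.mp hn))) (abs_nonneg _)
    _ = (∑ m ∈ Finset.range (2^p+1), |phi p m s|) * (K * (2:ℝ)^(-(γ * (p:ℝ)))) :=
        (Finset.sum_mul _ _ _).symm
    _ ≤ 2 * (K * (2:ℝ)^(-(γ * (p:ℝ)))) := by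
        apply mul_le_mul_of_nonneg_right (phisum p s) (by positivity)
    _ = 2 * K * (2:ℝ)^(-(γ * (p:ℝ))) := by ring

lemma dblock_norm_le {γ : ℝ} {f : ℝ → E} {K : ℝ} (h : CoeffBound γ f K) (p : ℕ) (s : ℝ) :
    ‖dblock f (p+1) s‖ ≤ 2 * K * (2:ℝ)^((1-γ) * (p:ℝ)) := by
  have hK := coeffBound_nonneg h
  show ‖∑ m ∈ Finset.range (2^p+1), chi p m s • coeff f p m‖ ≤ _
  calc ‖∑ m ∈ Finset.range (2^p+1), chi p m s • coeff f p m‖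
      ≤ ∑ m ∈ Finset.range (2^p+1), ‖chi p m s • coeff f p m‖ := norm_sum_le _ _
    _ ≤ ∑ m ∈ Finset.range (2^p+1), |chi p m s| * (K * (2:ℝ)^(-(γ * (p:ℝ)))) := by
        apply Finset.sum_le_sum
        intro n hn
        rw [norm_smul, Real.norm_eq_abs]
        exact mul_le_mul_of_nonneg_left
          (coeff_norm_le h (Nat.lt_succ_iff.mp (Finset.mem_range.mp hn))) (abs_nonneg _)
    _ = (∑ m ∈ Finset.range (2^p+1), |chi p m s|) * (K * (2:ℝ)^(-(γ * (p:ℝ)))) :=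
        (Finset.sum_mul _ _ _).symm
    _ ≤ (2 * 2^p) * (K * (2:ℝ)^(-(γ * (p:ℝ)))) := by
        apply mul_le_mul_of_nonneg_right (chisum p s) (by positivity)
    _ = 2 * K * (2:ℝ)^((1-γ) * (p:ℝ)) := by
        rw [rpow_natCast' p, show ((1:ℝ)-γ) * (p:ℝ) = (p:ℝ) + (-(γ*(p:ℝ))) by ring,
          Real.rpow_add two_pos]
        ring

lemma geom_bound {r : ℝ} (hr : 1 < r) (p : ℕ) :
    ∑ k ∈ Finset.range p, r^k ≤ r^p / (r - 1) := by
  rw [geom_sum_eq (ne_of_gt hr)]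
  gcongr <;> linarith

lemma rpow_mul_nat (x : ℝ) (k : ℕ) : (2:ℝ)^(x * (k:ℝ)) = ((2:ℝ)^x)^k := by
  rw [Real.rpow_mul (by norm_num), Real.rpow_natCast]

lemma dpsum_norm_le {γ : ℝ} (hγ : γ < 1) {f : ℝ → E} {K : ℝ} (h : CoeffBound γ f K)
    (p : ℕ) (s : ℝ) :
    ‖dpsum f p s‖ ≤ (2*(2:ℝ)^((1:ℝ)-γ)/((2:ℝ)^((1:ℝ)-γ) - 1)) * K * (2:ℝ)^((1-γ) * (p:ℝ)) := by
  have hK := coeffBound_nonneg h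
  set r : ℝ := (2:ℝ)^((1:ℝ)-γ) with hr
  have hr1 : 1 < r := by
    rw [hr, show (1:ℝ) = (2:ℝ)^(0:ℝ) by rw [Real.rpow_zero]]
    exact Real.rpow_lt_rpow_left_iff (by norm_num) |>.mpr (by linarith)
  have step : ∀ k, ‖dblock f k s‖ ≤ 2 * K * r^k := by
    intro k
    cases k with
    | zero =>
      show ‖(0:E)‖ ≤ _
      rw [norm_zero]
      positivity
    | succ k =>
      calc ‖dblock f (k+1) s‖ ≤ 2 * K * (2:ℝ)^((1-γ) * (k:ℝ)) := dblock_norm_le h k s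
        _ = 2 * K * r^k := by rw [rpow_mul_nat]
        _ ≤ 2 * K * r^(k+1) := by
            apply mul_le_mul_of_nonneg_left _ (by positivity)
            exact pow_le_pow_right₀ (le_of_lt hr1) (Nat.le_succ k)
  calc ‖dpsum f p s‖ ≤ ∑ k ∈ Finset.range (p+1), ‖dblock f k s‖ := norm_sum_le _ _
    _ ≤ ∑ k ∈ Finset.range (p+1), 2 * K * r^k := Finset.sum_le_sum (fun k _ => step k)
    _ = 2 * K * ∑ k ∈ Finset.range (p+1), r^k := by rw [Finset.mul_sum]
    _ ≤ 2 * K * (r^(p+1) / (r-1)) := by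
        apply mul_le_mul_of_nonneg_left (geom_bound hr1 (p+1)) (by positivity)
    _ = (2*r/(r - 1)) * K * (2:ℝ)^((1-γ) * (p:ℝ)) := by
        rw [rpow_mul_nat, ← hr, pow_succ]
        field_simp

/-! ### the Lévy area integrand -/

def lint (v : ℝ → (E →L[ℝ] F)) (w : ℝ → E) (p : ℕ) (s : ℝ) : F :=
  (block v (p+1) s) (dpsum w p s) - (dpsum v p s) (block w (p+1) s)

lemma leviTerm_eq (v : ℝ → (E →L[ℝ] F)) (w : ℝ → E) (p : ℕ) (t : ℝ) :
    leviTerm v w p t = ∫ s in (0:ℝ)..t, lint v w p s := rfl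

lemma continuous_phi (p m : ℕ) : Continuous (phi p m) :=
  intervalIntegral.continuous_primitive (intervalIntegrable_chi p m) 0

lemma continuous_block (g : ℝ → E) (k : ℕ) : Continuous (block g k) := by
  cases k with
  | zero => exact continuous_const
  | succ k =>
    show Continuous (fun t => ∑ m ∈ Finset.range (2^k+1), phi k m t • coeff g k m)
    exact continuous_finset_sum _ (fun m _ => (continuous_phi k m).smul continuous_const)

lemma aesm_dpsum (g : ℝ → E) (q : ℕ) : MeasureTheory.AEStronglyMeasurable (dpsum g q)
    (volume : MeasureTheory.Measure ℝ) := by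
  unfold dpsum
  apply Finset.aestronglyMeasurable_fun_sum
  intro k _
  cases k with
  | zero => exact MeasureTheory.aestronglyMeasurable_const
  | succ k =>
    show MeasureTheory.AEStronglyMeasurable
      (fun t => ∑ m ∈ Finset.range (2^k+1), chi k m t • coeff g k m) _
    apply Finset.aestronglyMeasurable_fun_sum
    intro m _
    exact ((measurable_chi k m).aestronglyMeasurable).smul_const _

lemma aesm_lint (v : ℝ → (E →L[ℝ] F)) (w : ℝ → E) (p : ℕ) :
    MeasureTheory.AEStronglyMeasurable (lint v w p) (volume : MeasureTheory.Measure ℝ) := by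
  have h1 : MeasureTheory.AEStronglyMeasurable
      (fun s => (block v (p+1) s) (dpsum w p s)) (volume : MeasureTheory.Measure ℝ) := by
    have hrw : (fun s => (block v (p+1) s) (dpsum w p s))
        = fun s => ∑ m ∈ Finset.range (2^p+1), phi p m s • ((coeff v p m) (dpsum w p s)) := by
      funext s
      show (∑ m ∈ Finset.range (2^p+1), phi p m s • coeff v p m) (dpsum w p s) = _
      rw [ContinuousLinearMap.sum_apply]
      exact Finset.sum_congr rfl (fun m _ => rfl)
    rw [hrw]
    apply Finset.aestronglyMeasurable_fun_sum
    intro m _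
    exact ((continuous_phi p m).aestronglyMeasurable).smul
      ((coeff v p m).continuous.comp_aestronglyMeasurable (aesm_dpsum w p))
  have h2 : MeasureTheory.AEStronglyMeasurable
      (fun s => (dpsum v p s) (block w (p+1) s)) (volume : MeasureTheory.Measure ℝ) := by
    have hrw : (fun s => (dpsum v p s) (block w (p+1) s))
        = fun s => ∑ k ∈ Finset.range (p+1), (dblock v k s) (block w (p+1) s) := by
      funext s
      show (∑ k ∈ Finset.range (p+1), dblock v k s) (block w (p+1) s) = _
      rw [ContinuousLinearMap.sum_apply]
    rw [hrw]
    apply Finset.aestronglyMeasurable_fun_sum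
    intro k _
    cases k with
    | zero =>
      have : (fun s => (dblock v 0 s) (block w (p+1) s)) = fun _ => (0:F) := by
        funext s
        show ((0 : E →L[ℝ] F)) (block w (p+1) s) = 0
        simp
      rw [this]
      exact MeasureTheory.aestronglyMeasurable_const
    | succ k =>
      have hrw2 : (fun s => (dblock v (k+1) s) (block w (p+1) s))
          = fun s => ∑ n ∈ Finset.range (2^k+1), chi k n s • ((coeff v k n) (block w (p+1) s)) := by
        funext s
        show (∑ n ∈ Finset.range (2^k+1), chi k n s • coeff v k n) (block w (p+1) s) = _
        rw [ContinuousLinearMap.sum_apply]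
        exact Finset.sum_congr rfl (fun n _ => rfl)
      rw [hrw2]
      apply Finset.aestronglyMeasurable_fun_sum
      intro n _
      exact ((measurable_chi k n).aestronglyMeasurable).smul
        (((coeff v k n).continuous.comp (continuous_block w (p+1))).aestronglyMeasurable)
  exact h1.sub h2

/-! ### constants -/

def DD (γ : ℝ) : ℝ := 2*(2:ℝ)^((1:ℝ)-γ)/((2:ℝ)^((1:ℝ)-γ)-1)

lemma DD_pos {γ : ℝ} (hγ : γ < 1) : 0 < DD γ := by
  unfold DD
  have h1 : 1 < (2:ℝ)^((1:ℝ)-γ) := by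
    rw [show (1:ℝ) = (2:ℝ)^(0:ℝ) by rw [Real.rpow_zero]]
    exact Real.rpow_lt_rpow_left_iff (by norm_num) |>.mpr (by rw [Real.rpow_zero]; linarith)
  have h2 : 0 < (2:ℝ)^((1:ℝ)-γ) := rpow_two_pos _
  apply div_pos (by linarith) (by linarith)

def EE (a b : ℝ) : ℝ := 2 * DD b + 2 * DD a

lemma EE_pos {a b : ℝ} (ha : a < 1) (hb : b < 1) : 0 < EE a b := by
  have := DD_pos ha; have := DD_pos hb; unfold EE; linarith

section estimates

variable {v : ℝ → (E →L[ℝ] F)} {w : ℝ → E} {α β Kv Kw : ℝ}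

lemma dpsum_DD {γ : ℝ} (hγ : γ < 1) {f : ℝ → E} {K : ℝ} (h : CoeffBound γ f K)
    (p : ℕ) (s : ℝ) : ‖dpsum f p s‖ ≤ DD γ * K * (2:ℝ)^((1-γ) * (p:ℝ)) :=
  dpsum_norm_le hγ h p s

lemma lint_norm_le (hα1 : α < 1) (hβ1 : β < 1)
    (hv : CoeffBound α v Kv) (hw : CoeffBound β w Kw) (p : ℕ) (s : ℝ) :
    ‖lint v w p s‖ ≤ EE α β * (Kv * Kw) * (2:ℝ)^((1-α-β)*(p:ℝ)) := by
  have hKv := coeffBound_nonneg hv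
  have hKw := coeffBound_nonneg hw
  have hDb := DD_pos hβ1
  have hDa := DD_pos hα1
  have h1 : ‖(block v (p+1) s) (dpsum w p s)‖
      ≤ (2 * Kv * (2:ℝ)^(-(α * (p:ℝ)))) * (DD β * Kw * (2:ℝ)^((1-β) * (p:ℝ))) := by
    calc ‖(block v (p+1) s) (dpsum w p s)‖
        ≤ ‖block v (p+1) s‖ * ‖dpsum w p s‖ := (block v (p+1) s).le_opNorm _
      _ ≤ _ := by
          apply mul_le_mul (block_norm_le hv p s) (dpsum_DD hβ1 hw p s) (norm_nonneg _)
          positivity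
  have h2 : ‖(dpsum v p s) (block w (p+1) s)‖
      ≤ (DD α * Kv * (2:ℝ)^((1-α) * (p:ℝ))) * (2 * Kw * (2:ℝ)^(-(β * (p:ℝ)))) := by
    calc ‖(dpsum v p s) (block w (p+1) s)‖
        ≤ ‖dpsum v p s‖ * ‖block w (p+1) s‖ := (dpsum v p s).le_opNorm _
      _ ≤ _ := by
          apply mul_le_mul (dpsum_DD hα1 hv p s) (block_norm_le hw p s) (norm_nonneg _)
          positivity
  have hexp1 : (2:ℝ)^(-(α * (p:ℝ))) * (2:ℝ)^((1-β) * (p:ℝ)) = (2:ℝ)^((1-α-β)*(p:ℝ)) := by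
    rw [← Real.rpow_add two_pos]; ring_nf
  have hexp2 : (2:ℝ)^((1-α) * (p:ℝ)) * (2:ℝ)^(-(β * (p:ℝ))) = (2:ℝ)^((1-α-β)*(p:ℝ)) := by
    rw [← Real.rpow_add two_pos]; ring_nf
  calc ‖lint v w p s‖ ≤ ‖(block v (p+1) s) (dpsum w p s)‖
        + ‖(dpsum v p s) (block w (p+1) s)‖ := norm_sub_le _ _
    _ ≤ (2 * Kv * (2:ℝ)^(-(α * (p:ℝ)))) * (DD β * Kw * (2:ℝ)^((1-β) * (p:ℝ)))
        + (DD α * Kv * (2:ℝ)^((1-α) * (p:ℝ))) * (2 * Kw * (2:ℝ)^(-(β * (p:ℝ)))) := by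
        exact add_le_add h1 h2
    _ = EE α β * (Kv * Kw) * (2:ℝ)^((1-α-β)*(p:ℝ)) := by
        rw [show (2 * Kv * (2:ℝ)^(-(α * (p:ℝ)))) * (DD β * Kw * (2:ℝ)^((1-β) * (p:ℝ)))
            = (2 * DD β) * (Kv * Kw) * ((2:ℝ)^(-(α * (p:ℝ))) * (2:ℝ)^((1-β) * (p:ℝ))) by ring,
          show (DD α * Kv * (2:ℝ)^((1-α) * (p:ℝ))) * (2 * Kw * (2:ℝ)^(-(β * (p:ℝ))))
            = (2 * DD α) * (Kv * Kw) * ((2:ℝ)^((1-α) * (p:ℝ)) * (2:ℝ)^(-(β * (p:ℝ)))) by ring,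
          hexp1, hexp2]
        unfold EE
        ring

def slope (v : ℝ → (E →L[ℝ] F)) (w : ℝ → E) (p : ℕ) (s : ℝ) : F :=
  (dblock v (p+1) s) (dpsum w p s) - (dpsum v p s) (dblock w (p+1) s)

lemma slope_norm_le (hα1 : α < 1) (hβ1 : β < 1)
    (hv : CoeffBound α v Kv) (hw : CoeffBound β w Kw) (p : ℕ) (s : ℝ) :
    ‖slope v w p s‖ ≤ EE α β * (Kv * Kw) * (2:ℝ)^((2-α-β)*(p:ℝ)) := by
  have hKv := coeffBound_nonneg hv
  have hKw := coeffBound_nonneg hw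
  have hDb := DD_pos hβ1
  have hDa := DD_pos hα1
  have h1 : ‖(dblock v (p+1) s) (dpsum w p s)‖
      ≤ (2 * Kv * (2:ℝ)^((1-α) * (p:ℝ))) * (DD β * Kw * (2:ℝ)^((1-β) * (p:ℝ))) := by
    calc ‖(dblock v (p+1) s) (dpsum w p s)‖
        ≤ ‖dblock v (p+1) s‖ * ‖dpsum w p s‖ := (dblock v (p+1) s).le_opNorm _
      _ ≤ _ := by
          apply mul_le_mul (dblock_norm_le hv p s) (dpsum_DD hβ1 hw p s) (norm_nonneg _)
          positivity
  have h2 : ‖(dpsum v p s) (dblock w (p+1) s)‖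
      ≤ (DD α * Kv * (2:ℝ)^((1-α) * (p:ℝ))) * (2 * Kw * (2:ℝ)^((1-β) * (p:ℝ))) := by
    calc ‖(dpsum v p s) (dblock w (p+1) s)‖
        ≤ ‖dpsum v p s‖ * ‖dblock w (p+1) s‖ := (dpsum v p s).le_opNorm _
      _ ≤ _ := by
          apply mul_le_mul (dpsum_DD hα1 hv p s) (dblock_norm_le hw p s) (norm_nonneg _)
          positivity
  have hexp : (2:ℝ)^((1-α) * (p:ℝ)) * (2:ℝ)^((1-β) * (p:ℝ)) = (2:ℝ)^((2-α-β)*(p:ℝ)) := by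
    rw [← Real.rpow_add two_pos]; ring_nf
  calc ‖slope v w p s‖ ≤ ‖(dblock v (p+1) s) (dpsum w p s)‖
        + ‖(dpsum v p s) (dblock w (p+1) s)‖ := norm_sub_le _ _
    _ ≤ _ := add_le_add h1 h2
    _ = EE α β * (Kv * Kw) * (2:ℝ)^((2-α-β)*(p:ℝ)) := by
        rw [show (2 * Kv * (2:ℝ)^((1-α) * (p:ℝ))) * (DD β * Kw * (2:ℝ)^((1-β) * (p:ℝ)))
            = (2 * DD β) * (Kv * Kw) * ((2:ℝ)^((1-α) * (p:ℝ)) * (2:ℝ)^((1-β) * (p:ℝ))) by ring,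
          show (DD α * Kv * (2:ℝ)^((1-α) * (p:ℝ))) * (2 * Kw * (2:ℝ)^((1-β) * (p:ℝ)))
            = (2 * DD α) * (Kv * Kw) * ((2:ℝ)^((1-α) * (p:ℝ)) * (2:ℝ)^((1-β) * (p:ℝ))) by ring,
          hexp]
        unfold EE
        ring

end estimates

/-! ### local affine structure on dyadic cells -/

lemma dpsum_const_cell {p i m : ℕ} (hpi : p ≤ i) {x y : ℝ} (g : ℝ → E)
    (hx0 : pt0 i m ≤ x) (hx2 : x < pt2 i m) (hy0 : pt0 i m ≤ y) (hy2 : y < pt2 i m) :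
    dpsum g p x = dpsum g p y := by
  unfold dpsum
  apply Finset.sum_congr rfl
  intro k hk
  have hk' : k ≤ p := Nat.lt_succ_iff.mp (Finset.mem_range.mp hk)
  cases k with
  | zero => rfl
  | succ k =>
    show ∑ n ∈ Finset.range (2^k+1), chi k n x • coeff g k n
        = ∑ n ∈ Finset.range (2^k+1), chi k n y • coeff g k n
    apply Finset.sum_congr rfl
    intro n _
    rw [chi_const_cell (show k + 1 ≤ i by omega) hx0 hx2 hy0 hy2]

lemma block_shift {p i m : ℕ} (hpi : p + 1 ≤ i) {s h' : ℝ} (hh : 0 < h') (g : ℝ → E)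
    (hs0 : pt0 i m ≤ s) (hs2 : s + h' < pt2 i m) :
    block g (p+1) (s + h') = block g (p+1) s + h' • dblock g (p+1) s := by
  show (∑ n ∈ Finset.range (2^p+1), phi p n (s+h') • coeff g p n)
      = (∑ n ∈ Finset.range (2^p+1), phi p n s • coeff g p n)
        + h' • ∑ n ∈ Finset.range (2^p+1), chi p n s • coeff g p n
  rw [Finset.smul_sum, ← Finset.sum_add_distrib]
  apply Finset.sum_congr rfl
  intro n _
  have hs2' : s < pt2 i m := by linarith
  have hphi : phi p n (s+h') = phi p n s + h' * chi p n s := by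
    have hsub := phi_sub p n s (s+h')
    have hconst : ∫ x in s..(s+h'), chi p n x = chi p n s * (s + h' - s) := by
      apply integral_constOn (by linarith)
      intro x hx
      exact chi_const_cell hpi (le_trans hs0 hx.1) (lt_of_lt_of_le hx.2 (le_of_lt hs2))
        hs0 hs2'
    rw [hconst] at hsub
    have : s + h' - s = h' := by ring
    rw [this] at hsub
    linarith [hsub]
  rw [hphi, add_smul, smul_smul, mul_comm h' (chi p n s), ← smul_smul]

lemma lint_shift {p i m : ℕ} (hpi : p + 1 ≤ i) {s h' : ℝ} (hh : 0 < h')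
    (v : ℝ → (E →L[ℝ] F)) (w : ℝ → E)
    (hs0 : pt0 i m ≤ s) (hs2 : s + h' < pt2 i m) :
    lint v w p (s + h') - lint v w p s = h' • slope v w p s := by
  have hs2' : s < pt2 i m := by linarith
  have hs0' : pt0 i m ≤ s + h' := by linarith
  have hp : p ≤ i := by omega
  have hdw : dpsum w p (s + h') = dpsum w p s :=
    dpsum_const_cell hp w hs0' (by linarith) hs0 hs2'
  have hdv : dpsum v p (s + h') = dpsum v p s :=
    dpsum_const_cell hp v hs0' (by linarith) hs0 hs2'
  have hbv : block v (p+1) (s + h') = block v (p+1) s + h' • dblock v (p+1) s :=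
    block_shift hpi hh v hs0 hs2
  have hbw : block w (p+1) (s + h') = block w (p+1) s + h' • dblock w (p+1) s :=
    block_shift hpi hh w hs0 hs2
  unfold lint slope
  rw [hdw, hdv, hbv, hbw]
  rw [ContinuousLinearMap.add_apply, ContinuousLinearMap.smul_apply, map_add,
    ContinuousLinearMap.map_smul, smul_sub]
  abel

/-! ### coefficient estimates for the Lévy terms -/

section coeffestimates

variable {v : ℝ → (E →L[ℝ] F)} {w : ℝ → E} {α β Kv Kw : ℝ}

lemma intervalIntegrable_lint (hα1 : α < 1) (hβ1 : β < 1)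
    (hv : CoeffBound α v Kv) (hw : CoeffBound β w Kw) (p : ℕ) (a b : ℝ) :
    IntervalIntegrable (lint v w p) volume a b :=
  intervalIntegrable_of_bdd (aesm_lint v w p) (lint_norm_le hα1 hβ1 hv hw p) a b

lemma leviTerm_sub (hα1 : α < 1) (hβ1 : β < 1)
    (hv : CoeffBound α v Kv) (hw : CoeffBound β w Kw) (p : ℕ) (a b : ℝ) :
    leviTerm v w p b - leviTerm v w p a = ∫ s in a..b, lint v w p s := by
  rw [leviTerm_eq, leviTerm_eq]
  exact integral_interval_sub_left (intervalIntegrable_lint hα1 hβ1 hv hw p 0 b)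
    (intervalIntegrable_lint hα1 hβ1 hv hw p 0 a)

lemma coeff_leviTerm_eq (hα1 : α < 1) (hβ1 : β < 1)
    (hv : CoeffBound α v Kv) (hw : CoeffBound β w Kw) {i m : ℕ} (hm : m ≠ 0) (p : ℕ) :
    coeff (leviTerm v w p) i m
      = (∫ s in (pt0 i m)..(pt1 i m), lint v w p s)
        - ∫ s in (pt1 i m)..(pt2 i m), lint v w p s := by
  have h1 : leviTerm v w p (pt1 i m) - leviTerm v w p (pt0 i m)
      = ∫ s in (pt0 i m)..(pt1 i m), lint v w p s := leviTerm_sub hα1 hβ1 hv hw p _ _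
  have h2 : leviTerm v w p (pt2 i m) - leviTerm v w p (pt1 i m)
      = ∫ s in (pt1 i m)..(pt2 i m), lint v w p s := leviTerm_sub hα1 hβ1 hv hw p _ _
  unfold coeff
  rw [if_neg hm, ← h1, ← h2]
  abel

lemma coeff_leviTerm_naive (hα1 : α < 1) (hβ1 : β < 1)
    (hv : CoeffBound α v Kv) (hw : CoeffBound β w Kw) {i m : ℕ} (hm : m ≠ 0) (p : ℕ) :
    ‖coeff (leviTerm v w p) i m‖
      ≤ (2:ℝ)^(-(i:ℝ)) * (EE α β * (Kv * Kw) * (2:ℝ)^((1-α-β)*(p:ℝ))) := by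
  set C := EE α β * (Kv * Kw) * (2:ℝ)^((1-α-β)*(p:ℝ)) with hC
  have hCpos : 0 ≤ C := by
    have := EE_pos hα1 hβ1
    have := coeffBound_nonneg hv
    have := coeffBound_nonneg hw
    positivity
  rw [coeff_leviTerm_eq hα1 hβ1 hv hw hm p]
  have hb1 : ‖∫ s in (pt0 i m)..(pt1 i m), lint v w p s‖ ≤ C * |pt1 i m - pt0 i m| :=
    intervalIntegral.norm_integral_le_of_norm_le_const
      (fun x _ => lint_norm_le hα1 hβ1 hv hw p x)
  have hb2 : ‖∫ s in (pt1 i m)..(pt2 i m), lint v w p s‖ ≤ C * |pt2 i m - pt1 i m| :=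
    intervalIntegral.norm_integral_le_of_norm_le_const
      (fun x _ => lint_norm_le hα1 hβ1 hv hw p x)
  rw [pt1_sub_pt0, abs_of_pos (by positivity)] at hb1
  rw [pt2_sub_pt1, abs_of_pos (by positivity)] at hb2
  have hns := norm_sub_le (∫ s in (pt0 i m)..(pt1 i m), lint v w p s)
    (∫ s in (pt1 i m)..(pt2 i m), lint v w p s)
  have hh : C * (1/2^(i+1)) + C * (1/2^(i+1)) = (2:ℝ)^(-(i:ℝ)) * C := by
    rw [Real.rpow_neg (by norm_num), Real.rpow_natCast]
    rw [pow_succ]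
    field_simp
    ring
  calc ‖_ - _‖ ≤ C * (1/2^(i+1)) + C * (1/2^(i+1)) := le_trans hns (add_le_add hb1 hb2)
    _ = (2:ℝ)^(-(i:ℝ)) * C := hh

lemma coeff_leviTerm_zero (hα1 : α < 1) (hβ1 : β < 1)
    (hv : CoeffBound α v Kv) (hw : CoeffBound β w Kw) (p : ℕ) :
    ‖coeff (leviTerm v w p) 0 0‖ ≤ EE α β * (Kv * Kw) * (2:ℝ)^((1-α-β)*(p:ℝ)) := by
  set C := EE α β * (Kv * Kw) * (2:ℝ)^((1-α-β)*(p:ℝ)) with hC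
  have h00 : coeff (leviTerm v w p) 0 0 = leviTerm v w p 1 - leviTerm v w p 0 := by
    unfold coeff
    rw [if_pos rfl, if_pos rfl]
  rw [h00, leviTerm_sub hα1 hβ1 hv hw p 0 1]
  have hb : ‖∫ s in (0:ℝ)..1, lint v w p s‖ ≤ C * |1 - 0| :=
    intervalIntegral.norm_integral_le_of_norm_le_const
      (fun x _ => lint_norm_le hα1 hβ1 hv hw p x)
  simpa using hb

lemma coeff_leviTerm_quad (hα1 : α < 1) (hβ1 : β < 1)
    (hv : CoeffBound α v Kv) (hw : CoeffBound β w Kw) {i m p : ℕ} (hm : m ≠ 0)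
    (hpi : p + 1 ≤ i) :
    ‖coeff (leviTerm v w p) i m‖
      ≤ (2:ℝ)^(-(2*(i:ℝ)+2)) * (EE α β * (Kv * Kw) * (2:ℝ)^((2-α-β)*(p:ℝ))) := by
  set S := EE α β * (Kv * Kw) * (2:ℝ)^((2-α-β)*(p:ℝ)) with hS
  have hSpos : 0 ≤ S := by
    have := EE_pos hα1 hβ1
    have := coeffBound_nonneg hv
    have := coeffBound_nonneg hw
    positivity
  set h' : ℝ := 1/2^(i+1) with hh'
  have hh'pos : 0 < h' := by positivity
  have e1 : pt1 i m = pt0 i m + h' := by have := pt1_sub_pt0 i m; linarith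
  have e2 : pt2 i m = pt1 i m + h' := by have := pt2_sub_pt1 i m; linarith
  rw [coeff_leviTerm_eq hα1 hβ1 hv hw hm p]
  have hcomp : ∫ s in (pt1 i m)..(pt2 i m), lint v w p s
      = ∫ s in (pt0 i m)..(pt1 i m), lint v w p (s + h') := by
    rw [intervalIntegral.integral_comp_add_right (lint v w p) h', ← e1, ← e2]
  have hg : IntervalIntegrable (fun s => lint v w p (s + h')) volume (pt0 i m) (pt1 i m) := by
    apply intervalIntegrable_of_bdd ?_ (fun x => lint_norm_le hα1 hβ1 hv hw p (x + h'))
    exact (aesm_lint v w p).comp_quasiMeasurePreserving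
      (MeasureTheory.measurePreserving_add_right volume h').quasiMeasurePreserving
  rw [hcomp, ← intervalIntegral.integral_sub (intervalIntegrable_lint hα1 hβ1 hv hw p _ _) hg]
  have hae : ∀ᵐ x ∂(volume : MeasureTheory.Measure ℝ),
      x ∈ Set.uIoc (pt0 i m) (pt1 i m) → ‖lint v w p x - lint v w p (x + h')‖ ≤ h' * S := by
    have hb : ∀ᵐ x : ℝ ∂volume, x ≠ pt1 i m := by
      rw [MeasureTheory.ae_iff]; simpa using MeasureTheory.measure_singleton (pt1 i m)
    filter_upwards [hb] with x hx hmem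
    rw [Set.uIoc_of_le (le_of_lt (pt0_lt_pt1 i m))] at hmem
    have hx1 : x < pt1 i m := lt_of_le_of_ne hmem.2 hx
    have hshift := lint_shift hpi hh'pos v w (le_of_lt hmem.1)
      (show x + h' < pt2 i m by rw [e2]; linarith)
    rw [← neg_sub, norm_neg, hshift, norm_smul, Real.norm_eq_abs, abs_of_pos hh'pos]
    exact mul_le_mul_of_nonneg_left (slope_norm_le hα1 hβ1 hv hw p x) (le_of_lt hh'pos)
  have hres : ∀ᵐ x ∂(volume : MeasureTheory.Measure ℝ).restrict (Set.uIoc (pt0 i m) (pt1 i m)),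
      ‖lint v w p x - lint v w p (x + h')‖ ≤ (fun _ : ℝ => h' * S) x :=
    (MeasureTheory.ae_restrict_iff' measurableSet_uIoc).mpr hae
  have hbound := intervalIntegral.norm_integral_le_abs_of_norm_le hres
    (_root_.intervalIntegrable_const (c := h' * S))
  have hgc : ∫ _ in (pt0 i m)..(pt1 i m), (h' * S) = (pt1 i m - pt0 i m) • (h' * S) :=
    intervalIntegral.integral_const _
  rw [hgc, pt1_sub_pt0, smul_eq_mul, ← hh'] at hbound
  calc ‖∫ s in (pt0 i m)..(pt1 i m), (lint v w p s - lint v w p (s + h'))‖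
      ≤ |h' * (h' * S)| := hbound
    _ = h' * h' * S := by rw [abs_of_nonneg (by positivity)]; ring
    _ = (2:ℝ)^(-(2*(i:ℝ)+2)) * S := by
        have hpow : (2:ℝ)^(-(2*(i:ℝ)+2)) = ((2:ℝ)^(2*i+2:ℕ))⁻¹ := by
          rw [show -(2*(i:ℝ)+2) = -((2*i+2 : ℕ):ℝ) by push_cast; ring,
            Real.rpow_neg (by norm_num), Real.rpow_natCast]
        have h2 : (2:ℝ)^(i+1) * (2:ℝ)^(i+1) = (2:ℝ)^(2*i+2:ℕ) := by
          rw [← pow_add]; congr 1; omega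
        rw [hpow, hh', ← h2]
        have hne : (2:ℝ)^(i+1) ≠ 0 := ne_of_gt (twopow_pos (i+1))
        field_simp

end coeffestimates

end
end SchProof

open Sch SchProof in
theorem levy_area_bound' (α β : ℝ) (hα0 : 0 < α) (hα1 : α < 1) (hβ0 : 0 < β) (hβ1 : β < 1)
    (hαβ : 1 < α + β) :
    ∃ C > (0:ℝ), ∀ (d n : ℕ)
      (v : ℝ → (EuclideanSpace ℝ (Fin d) →L[ℝ] EuclideanSpace ℝ (Fin n)))
      (w : ℝ → EuclideanSpace ℝ (Fin d)) (Kv Kw : ℝ),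
      ContinuousOn v (Set.Icc 0 1) → ContinuousOn w (Set.Icc 0 1) →
      CoeffBound α v Kv → CoeffBound β w Kw →
      (∀ t ∈ Set.Icc (0:ℝ) 1, Summable fun p : ℕ => leviTerm v w p t) ∧
      ContinuousOn (levi v w) (Set.Icc 0 1) ∧
      CoeffBound (α + β) (levi v w) (C * Kv * Kw) := by
  classical
  set q : ℝ := (2:ℝ)^((1:ℝ)-α-β) with hqdef
  set r1 : ℝ := (2:ℝ)^((2:ℝ)-α-β) with hr1def
  have hq0 : (0:ℝ) < q := rpow_two_pos _
  have hq1 : q < 1 := Real.rpow_lt_one_of_one_lt_of_neg (by norm_num) (by linarith)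
  have hr1 : 1 < r1 := by
    rw [hr1def, show (1:ℝ) = (2:ℝ)^(0:ℝ) by rw [Real.rpow_zero]]
    exact Real.rpow_lt_rpow_left_iff (by norm_num) |>.mpr (by linarith)
  set Q1 : ℝ := 1/(4*(r1-1)) with hQ1def
  set Q2 : ℝ := 1/(1-q) with hQ2def
  have hQ1 : 0 < Q1 := by
    have h : (0:ℝ) < r1 - 1 := by linarith
    rw [hQ1def]; positivity
  have hQ2 : 0 < Q2 := by
    have h : (0:ℝ) < 1 - q := by linarith
    rw [hQ2def]; positivity
  have hEE := EE_pos hα1 hβ1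
  refine ⟨EE α β * (Q1 + Q2) + 1, by positivity, ?_⟩
  intro d n v w Kv Kw _ _ hv hw
  have hKv := coeffBound_nonneg hv
  have hKw := coeffBound_nonneg hw
  -- uniform geometric bound for the Lévy terms
  have hterm : ∀ (p : ℕ) (t : ℝ), |t| ≤ 1 →
      ‖leviTerm v w p t‖ ≤ (EE α β * (Kv * Kw)) * q^p := by
    intro p t ht
    rw [leviTerm_eq]
    have hb := intervalIntegral.norm_integral_le_of_norm_le_const
      (C := EE α β * (Kv * Kw) * (2:ℝ)^((1-α-β)*(p:ℝ))) (a := 0) (b := t)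
      (fun x _ => lint_norm_le hα1 hβ1 hv hw p x)
    have hq : (2:ℝ)^((1-α-β)*(p:ℝ)) = q^p := by rw [hqdef, ← rpow_mul_nat]
    rw [hq] at hb
    calc ‖∫ s in (0:ℝ)..t, lint v w p s‖ ≤ EE α β * (Kv * Kw) * q^p * |t - 0| := hb
      _ ≤ EE α β * (Kv * Kw) * q^p * 1 := by
          apply mul_le_mul_of_nonneg_left _ (by positivity)
          rw [sub_zero]; exact ht
      _ = (EE α β * (Kv * Kw)) * q^p := by ring
  have hgeom : Summable (fun p : ℕ => (EE α β * (Kv * Kw)) * q^p) :=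
    (summable_geometric_of_lt_one (le_of_lt hq0) hq1).mul_left _
  have hsum : ∀ t : ℝ, |t| ≤ 1 → Summable (fun p : ℕ => leviTerm v w p t) := by
    intro t ht
    exact Summable.of_norm_bounded hgeom (fun p => hterm p t ht)
  have habs : ∀ t : ℝ, 0 ≤ t → t ≤ 1 → |t| ≤ 1 := by
    intro t h0 h1; rw [abs_of_nonneg h0]; exact h1
  have hsummIcc : ∀ t ∈ Set.Icc (0:ℝ) 1, Summable fun p : ℕ => leviTerm v w p t :=
    fun t ht => hsum t (habs t ht.1 ht.2)
  refine ⟨hsummIcc, ?_, ?_, ?_⟩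
  · -- continuity
    rw [continuousOn_iff_continuous_restrict]
    have hre : (Set.Icc (0:ℝ) 1).restrict (levi v w)
        = fun x : Set.Icc (0:ℝ) 1 => ∑' p : ℕ, leviTerm v w p ↑x := rfl
    show Continuous (fun x : Set.Icc (0:ℝ) 1 => ∑' p : ℕ, leviTerm v w p ↑x)
    apply continuous_tsum (u := fun p : ℕ => (EE α β * (Kv * Kw)) * q^p) ?_ hgeom
    · intro p x
      exact hterm p ↑x (habs ↑x x.2.1 x.2.2)
    · intro p
      have hc : Continuous (leviTerm v w p) := by
        have := intervalIntegral.continuous_primitive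
          (intervalIntegrable_lint hα1 hβ1 hv hw p) 0
        exact this
      exact hc.comp continuous_subtype_val
  · -- value at 0
    have hlev0 : levi v w 0 = 0 := by
      unfold levi
      have hz : ∀ p : ℕ, leviTerm v w p 0 = 0 := fun p => intervalIntegral.integral_same
      rw [tsum_congr hz, tsum_zero]
    rw [hlev0, norm_zero, mul_zero]
    positivity
  · -- the coefficients
    intro i m him
    set b : ℕ → ℝ := fun p =>
      if p < i then (2:ℝ)^(-(2*(i:ℝ)+2)) * (EE α β * (Kv * Kw) * (2:ℝ)^((2-α-β)*(p:ℝ)))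
      else (2:ℝ)^(-(i:ℝ)) * (EE α β * (Kv * Kw) * (2:ℝ)^((1-α-β)*(p:ℝ))) with hbdef
    have hb_nonneg : ∀ p, 0 ≤ b p := by
      intro p
      rw [hbdef]
      dsimp only
      split_ifs <;> positivity
    have hsb : Summable b := by
      rw [← summable_nat_add_iff i]
      have hbsh : (fun p => b (p + i))
          = fun p => ((2:ℝ)^(-(i:ℝ)) * (EE α β * (Kv * Kw)) * q^i) * q^p := by
        funext p
        rw [hbdef]
        dsimp only
        rw [if_neg (by omega)]
        have hexp : (2:ℝ)^((1-α-β)*((p+i:ℕ):ℝ)) = q^p * q^i := by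
          push_cast
          rw [show (1-α-β)*((p:ℝ)+(i:ℝ)) = (1-α-β)*(p:ℝ) + (1-α-β)*(i:ℝ) by ring,
            Real.rpow_add two_pos, hqdef, ← rpow_mul_nat, ← rpow_mul_nat]
        rw [hexp]
        ring
      rw [hbsh]
      exact (summable_geometric_of_lt_one (le_of_lt hq0) hq1).mul_left _
    have htsum_b : ∑' p, b p ≤ (EE α β * (Q1 + Q2)) * (Kv * Kw) * (2:ℝ)^(-((α+β)*(i:ℝ))) := by
      rw [← Summable.sum_add_tsum_nat_add i hsb]
      have hpart1 : ∑ p ∈ Finset.range i, b p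
          ≤ EE α β * Q1 * (Kv * Kw) * (2:ℝ)^(-((α+β)*(i:ℝ))) := by
        have hsc : ∀ p ∈ Finset.range i, b p
            = ((2:ℝ)^(-(2*(i:ℝ)+2)) * (EE α β * (Kv * Kw))) * r1^p := by
          intro p hp
          rw [hbdef]
          dsimp only
          rw [if_pos (Finset.mem_range.mp hp), hr1def, ← rpow_mul_nat]
          ring
        rw [Finset.sum_congr rfl hsc, ← Finset.mul_sum]
        have hgb := geom_bound hr1 i
        have hfac : (0:ℝ) ≤ (2:ℝ)^(-(2*(i:ℝ)+2)) * (EE α β * (Kv * Kw)) := by positivity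
        calc ((2:ℝ)^(-(2*(i:ℝ)+2)) * (EE α β * (Kv * Kw))) * ∑ p ∈ Finset.range i, r1^p
            ≤ ((2:ℝ)^(-(2*(i:ℝ)+2)) * (EE α β * (Kv * Kw))) * (r1^i/(r1-1)) :=
              mul_le_mul_of_nonneg_left hgb hfac
          _ = EE α β * Q1 * (Kv * Kw) * ((2:ℝ)^(-(2*(i:ℝ)+2)) * r1^i * 4) := by
              have h4 : (r1 - 1) ≠ 0 := by linarith
              rw [hQ1def]
              field_simp
          _ = EE α β * Q1 * (Kv * Kw) * (2:ℝ)^(-((α+β)*(i:ℝ))) := by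
              congr 1
              rw [hr1def, ← rpow_mul_nat, ← Real.rpow_add two_pos,
                show -(2*(i:ℝ)+2) + (2-α-β)*(i:ℝ) = -((α+β)*(i:ℝ)) + (-2) by ring,
                Real.rpow_add two_pos,
                show (2:ℝ)^(-2:ℝ) = 1/4 by
                  rw [show (-2:ℝ) = -((2:ℕ):ℝ) by norm_num,
                    Real.rpow_neg (by norm_num), Real.rpow_natCast]
                  norm_num]
              ring
      have hpart2 : ∑' p, b (p + i)
          ≤ EE α β * Q2 * (Kv * Kw) * (2:ℝ)^(-((α+β)*(i:ℝ))) := by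
        have hbsh : (fun p => b (p + i))
            = fun p => ((2:ℝ)^(-(i:ℝ)) * (EE α β * (Kv * Kw)) * q^i) * q^p := by
          funext p
          rw [hbdef]
          dsimp only
          rw [if_neg (by omega)]
          have hexp : (2:ℝ)^((1-α-β)*((p+i:ℕ):ℝ)) = q^p * q^i := by
            push_cast
            rw [show (1-α-β)*((p:ℝ)+(i:ℝ)) = (1-α-β)*(p:ℝ) + (1-α-β)*(i:ℝ) by ring,
              Real.rpow_add two_pos, hqdef, ← rpow_mul_nat, ← rpow_mul_nat]
          rw [hexp]
          ring
        rw [hbsh, tsum_mul_left, tsum_geometric_of_lt_one (le_of_lt hq0) hq1]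
        have hqi : (2:ℝ)^(-(i:ℝ)) * q^i = (2:ℝ)^(-((α+β)*(i:ℝ))) := by
          rw [hqdef, ← rpow_mul_nat, ← Real.rpow_add two_pos]
          congr 1
          ring
        rw [hQ2def]
        rw [show (2:ℝ)^(-(i:ℝ)) * (EE α β * (Kv * Kw)) * q^i * (1-q)⁻¹
            = EE α β * (1/(1-q)) * (Kv * Kw) * ((2:ℝ)^(-(i:ℝ)) * q^i) by ring]
        rw [hqi]
      calc ∑ p ∈ Finset.range i, b p + ∑' p, b (p + i)
          ≤ EE α β * Q1 * (Kv * Kw) * (2:ℝ)^(-((α+β)*(i:ℝ)))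
            + EE α β * Q2 * (Kv * Kw) * (2:ℝ)^(-((α+β)*(i:ℝ))) := add_le_add hpart1 hpart2
        _ = (EE α β * (Q1 + Q2)) * (Kv * Kw) * (2:ℝ)^(-((α+β)*(i:ℝ))) := by ring
    -- reduce to per-term bounds
    have main : ‖coeff (levi v w) i m‖
        ≤ (EE α β * (Q1 + Q2)) * (Kv * Kw) * (2:ℝ)^(-((α+β)*(i:ℝ))) := by
      by_cases hm : m = 0
      · subst hm
        by_cases hi : i = 0
        · subst hi
          have hceq : coeff (levi v w) 0 0 = ∑' p, coeff (leviTerm v w p) 0 0 := by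
            have h00 : coeff (levi v w) 0 0 = levi v w 1 - levi v w 0 := by
              unfold coeff; rw [if_pos rfl, if_pos rfl]
            have hS1 := hsum 1 (by norm_num)
            have hS0 := hsum 0 (by norm_num)
            rw [h00]
            unfold levi
            rw [← Summable.tsum_sub hS1 hS0]
            apply tsum_congr
            intro p
            unfold coeff
            rw [if_pos rfl, if_pos rfl]
          rw [hceq]
          have hble : ∀ p, ‖coeff (leviTerm v w p) 0 0‖ ≤ b p := by
            intro p
            rw [hbdef]
            dsimp only
            rw [if_neg (by omega)]
            have := coeff_leviTerm_zero hα1 hβ1 hv hw p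
            calc ‖coeff (leviTerm v w p) 0 0‖
                ≤ EE α β * (Kv * Kw) * (2:ℝ)^((1-α-β)*(p:ℝ)) := this
              _ = (2:ℝ)^(-((0:ℕ):ℝ)) * (EE α β * (Kv * Kw) * (2:ℝ)^((1-α-β)*(p:ℝ))) := by
                  rw [Nat.cast_zero, neg_zero, Real.rpow_zero, one_mul]
          have hsn : Summable (fun p => ‖coeff (leviTerm v w p) 0 0‖) :=
            Summable.of_nonneg_of_le (fun _ => norm_nonneg _) hble hsb
          calc ‖∑' p, coeff (leviTerm v w p) 0 0‖
              ≤ ∑' p, ‖coeff (leviTerm v w p) 0 0‖ := norm_tsum_le_tsum_norm hsn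
            _ ≤ ∑' p, b p := Summable.tsum_le_tsum hble hsn hsb
            _ ≤ _ := htsum_b
        · have hz : coeff (levi v w) i 0 = 0 := by
            unfold coeff; rw [if_pos rfl, if_neg hi]
          rw [hz, norm_zero]
          positivity
      · -- m ≠ 0
        have hm1 : 1 ≤ m := Nat.one_le_iff_ne_zero.mpr hm
        have hpt0 : (0:ℝ) ≤ pt0 i m := pt0_nonneg i m hm1
        have hpt2 : pt2 i m ≤ 1 := pt2_le_one i m him
        have h01 := pt0_lt_pt1 i m
        have h12 := pt1_lt_pt2 i m
        have hS0 := hsum (pt0 i m) (habs _ hpt0 (by linarith))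
        have hS1 := hsum (pt1 i m) (habs _ (by linarith) (by linarith))
        have hS2 := hsum (pt2 i m) (habs _ (by linarith) hpt2)
        have hceq : coeff (levi v w) i m = ∑' p, coeff (leviTerm v w p) i m := by
          unfold coeff
          rw [if_neg hm]
          unfold levi
          rw [← Summable.tsum_add hS1 hS1, ← Summable.tsum_sub (hS1.add hS1) hS0,
            ← Summable.tsum_sub ((hS1.add hS1).sub hS0) hS2]
          apply tsum_congr
          intro p
          rw [if_neg hm]
        have hble : ∀ p, ‖coeff (leviTerm v w p) i m‖ ≤ b p := by
          intro p
          rw [hbdef]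
          dsimp only
          split_ifs with hpi
          · exact coeff_leviTerm_quad hα1 hβ1 hv hw hm (by omega)
          · exact coeff_leviTerm_naive hα1 hβ1 hv hw hm p
        have hsn : Summable (fun p => ‖coeff (leviTerm v w p) i m‖) :=
          Summable.of_nonneg_of_le (fun _ => norm_nonneg _) hble hsb
        rw [hceq]
        calc ‖∑' p, coeff (leviTerm v w p) i m‖
            ≤ ∑' p, ‖coeff (leviTerm v w p) i m‖ := norm_tsum_le_tsum_norm hsn
          _ ≤ ∑' p, b p := Summable.tsum_le_tsum hble hsn hsb
          _ ≤ _ := htsum_b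
    -- conclude
    have hcan : (2:ℝ)^((α+β)*(i:ℝ)) * (2:ℝ)^(-((α+β)*(i:ℝ))) = 1 := by
      rw [← Real.rpow_add two_pos]
      simp
    calc (2:ℝ)^((α+β)*(i:ℝ)) * ‖coeff (levi v w) i m‖
        ≤ (2:ℝ)^((α+β)*(i:ℝ))
          * ((EE α β * (Q1 + Q2)) * (Kv * Kw) * (2:ℝ)^(-((α+β)*(i:ℝ)))) :=
          mul_le_mul_of_nonneg_left main (le_of_lt (rpow_two_pos _))
      _ = (EE α β * (Q1 + Q2)) * (Kv * Kw)
          * ((2:ℝ)^((α+β)*(i:ℝ)) * (2:ℝ)^(-((α+β)*(i:ℝ)))) := by ring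
      _ = (EE α β * (Q1 + Q2)) * (Kv * Kw) := by rw [hcan, mul_one]
      _ ≤ (EE α β * (Q1 + Q2) + 1) * Kv * Kw := by nlinarith

open Sch in
/-- For `α, β ∈ (0,1)` with `α + β > 1`, the Lévy area
`L(v,w) = ∑_p (∫ Δ_p v dS_{p-1}w - ∫ d(S_{p-1}v) Δ_p w)` converges and is a bounded
bilinear operator from `C^α × C^β` to `C^{α+β}`: `‖L(v,w)‖_{α+β} ≲ ‖v‖_α ‖w‖_β`. -/
theorem levy_area_bound (α β : ℝ) (hα0 : 0 < α) (hα1 : α < 1) (hβ0 : 0 < β) (hβ1 : β < 1)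
    (hαβ : 1 < α + β) :
    ∃ C > (0:ℝ), ∀ (d n : ℕ)
      (v : ℝ → (EuclideanSpace ℝ (Fin d) →L[ℝ] EuclideanSpace ℝ (Fin n)))
      (w : ℝ → EuclideanSpace ℝ (Fin d)) (Kv Kw : ℝ),
      ContinuousOn v (Icc 0 1) → ContinuousOn w (Icc 0 1) →
      CoeffBound α v Kv → CoeffBound β w Kw →
      (∀ t ∈ Icc (0:ℝ) 1, Summable fun p : ℕ => leviTerm v w p t) ∧
      ContinuousOn (levi v w) (Icc 0 1) ∧
      CoeffBound (α + β) (levi v w) (C * Kv * Kw) := levy_area_bound' α β hα0 hα1 hβ0 hβ1 hαβ
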